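/- Let W be a set of density operators invariant under a TPCP map T[ρ] = Σ_k M_k ρ M_k†, and let H_W be the span of the union of the supports of all elements of W. Then the set of all density operators with support contained in H_W is invariant under T. -/

import Mathlib

set_option maxHeartbeats 1000000


open Matrix Finset
open scoped ComplexOrder

/-- Range of `A * Aᴴ` equals range of `A`. -/
private lemma range_mul_conjTranspose_self {n : ℕ} (A : Matrix (Fin n) (Fin n) ℂ) :
    LinearMap.range (A * Aᴴ).mulVecLin = LinearMap.range A.mulVecLin := by
  apply Submodule.eq_of_le_of_finrank_le
  · rw [Matrix.mulVecLin_mul]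
    exact LinearMap.range_comp_le_range _ _
  · have h := Matrix.rank_self_mul_conjTranspose A
    unfold Matrix.rank at h
    exact h.ge

/-- Factorization of a linear map through another with bigger kernel. -/
private lemma exists_comp_of_ker_le {V W : Type*} [AddCommGroup V] [Module ℂ V]
    [AddCommGroup W] [Module ℂ W] (f g : V →ₗ[ℂ] W)
    (h : LinearMap.ker g ≤ LinearMap.ker f) : ∃ h : W →ₗ[ℂ] W, f = h ∘ₗ g := by
  let e := g.quotKerEquivRange
  let f' : (V ⧸ LinearMap.ker g) →ₗ[ℂ] W := (LinearMap.ker g).liftQ f h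
  obtain ⟨h₁, hh₁⟩ := (f' ∘ₗ (e.symm : LinearMap.range g →ₗ[ℂ] _)).exists_extend
  refine ⟨h₁, ?_⟩
  ext x
  have hmem : g x ∈ LinearMap.range g := ⟨x, rfl⟩
  have : (LinearMap.range g).subtype ⟨g x, hmem⟩ = g x := rfl
  calc f x = f' (Submodule.Quotient.mk x) := (Submodule.liftQ_apply _ _ _).symm
    _ = f' (e.symm ⟨g x, hmem⟩) := by
        congr 1
        exact (LinearEquiv.eq_symm_apply e).mpr (Subtype.ext (g.quotKerEquivRange_apply_mk x))
    _ = (f' ∘ₗ (e.symm : LinearMap.range g →ₗ[ℂ] _)) ⟨g x, hmem⟩ := rfl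
    _ = h₁ ((LinearMap.range g).subtype ⟨g x, hmem⟩) := by rw [← hh₁]; rfl
    _ = (h₁ ∘ₗ g) x := rfl

/-- For Hermitian matrices, kernel inclusion gives reverse range inclusion. -/
private lemma range_le_of_ker_le {n : ℕ} {A S : Matrix (Fin n) (Fin n) ℂ}
    (hA : A.IsHermitian) (hS : S.IsHermitian)
    (h : LinearMap.ker S.mulVecLin ≤ LinearMap.ker A.mulVecLin) :
    LinearMap.range A.mulVecLin ≤ LinearMap.range S.mulVecLin := by
  obtain ⟨h₁, hh₁⟩ := exists_comp_of_ker_le A.mulVecLin S.mulVecLin h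
  set Z : Matrix (Fin n) (Fin n) ℂ := LinearMap.toMatrix' h₁ with hZ
  have hZS : A = Z * S := by
    apply Matrix.toLin'.injective
    rw [Matrix.toLin'_apply', Matrix.toLin'_apply', Matrix.mulVecLin_mul, hh₁, hZ]
    congr 1
    exact (Matrix.toLin'_toMatrix' h₁).symm
  have hA' : A = S * Zᴴ := by
    conv_lhs => rw [← hA.eq]
    rw [hZS, Matrix.conjTranspose_mul, hS.eq]
  rw [hA', Matrix.mulVecLin_mul]
  exact LinearMap.range_comp_le_range _ _

/-- Sum of matrices acting on a vector. -/
private lemma sum_mulVec' {n K : ℕ} (A : Fin K → Matrix (Fin n) (Fin n) ℂ) (v : Fin n → ℂ) :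
    (∑ j, A j) *ᵥ v = ∑ j, A j *ᵥ v := by
  ext i
  simp only [Matrix.mulVec, dotProduct, Matrix.sum_apply, Finset.sum_apply,
    Finset.sum_mul]
  exact Finset.sum_comm

/-- Dot product with a sum of vectors. -/
private lemma dotProduct_sum' {n K : ℕ} (x : Fin n → ℂ) (w : Fin K → Fin n → ℂ) :
    x ⬝ᵥ (∑ j, w j) = ∑ j, x ⬝ᵥ w j := by
  simp only [dotProduct, Finset.sum_apply, Finset.mul_sum]
  exact Finset.sum_comm

/-- A sum of PSD matrices is PSD. -/
private lemma posSemidef_sum' {n K : ℕ} (A : Fin K → Matrix (Fin n) (Fin n) ℂ)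
    (hA : ∀ k, (A k).PosSemidef) : (∑ k, A k).PosSemidef := by
  refine Matrix.PosSemidef.of_dotProduct_mulVec_nonneg ?_ ?_
  · show (∑ k, A k)ᴴ = _
    rw [Matrix.conjTranspose_sum]
    exact Finset.sum_congr rfl fun k _ => (hA k).1
  · intro x
    rw [sum_mulVec', dotProduct_sum']
    exact Finset.sum_nonneg fun k _ => (hA k).dotProduct_mulVec_nonneg x

/-- Kernel of a sum of PSD matrices is contained in the kernel of each summand. -/
private lemma ker_sum_le_ker {n K : ℕ} (A : Fin K → Matrix (Fin n) (Fin n) ℂ)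
    (hA : ∀ k, (A k).PosSemidef) (k : Fin K) :
    LinearMap.ker (∑ j, A j).mulVecLin ≤ LinearMap.ker (A k).mulVecLin := by
  intro x hx
  rw [LinearMap.mem_ker, Matrix.mulVecLin_apply] at hx ⊢
  have hsum : ∑ j, star x ⬝ᵥ (A j *ᵥ x) = 0 := by
    rw [← dotProduct_sum', ← sum_mulVec', hx, dotProduct_zero]
  have hzero : ∀ j ∈ Finset.univ, star x ⬝ᵥ (A j *ᵥ x) = 0 :=
    (Finset.sum_eq_zero_iff_of_nonneg fun j _ => (hA j).dotProduct_mulVec_nonneg x).mp hsum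
  exact ((hA k).dotProduct_mulVec_zero_iff x).mp (hzero k (Finset.mem_univ k))

/-- Range of a sum of matrices is contained in the sup of ranges. -/
private lemma range_sum_le {n K : ℕ} (A : Fin K → Matrix (Fin n) (Fin n) ℂ) :
    LinearMap.range (∑ j, A j).mulVecLin ≤ ⨆ j, LinearMap.range (A j).mulVecLin := by
  rintro x ⟨v, rfl⟩
  rw [Matrix.mulVecLin_apply, sum_mulVec']
  exact Submodule.sum_mem _ fun j _ =>
    Submodule.mem_iSup_of_mem j ⟨v, Matrix.mulVecLin_apply _ _⟩

open scoped MatrixOrder in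
/-- Image of the range of a PSD matrix under `M` is the range of `M σ Mᴴ`. -/
private lemma map_range_psd {n : ℕ} {σ : Matrix (Fin n) (Fin n) ℂ} (hσ : σ.PosSemidef)
    (M : Matrix (Fin n) (Fin n) ℂ) :
    Submodule.map M.mulVecLin (LinearMap.range σ.mulVecLin)
      = LinearMap.range (M * σ * Mᴴ).mulVecLin := by
  set s := CFC.sqrt σ with hs
  have hherm : sᴴ = s := (CFC.sqrt_nonneg σ).posSemidef.1
  have hss : s * sᴴ = σ := by rw [hherm]; exact CFC.sqrt_mul_sqrt_self σ hσ.nonneg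
  have h1 : LinearMap.range σ.mulVecLin = LinearMap.range s.mulVecLin := by
    rw [← hss]; exact range_mul_conjTranspose_self s
  have h2 : M * σ * Mᴴ = (M * s) * (M * s)ᴴ := by
    rw [Matrix.conjTranspose_mul, hherm, ← hss, hherm]
    simp only [Matrix.mul_assoc]
  rw [h1, h2, range_mul_conjTranspose_self, Matrix.mulVecLin_mul, LinearMap.range_comp]

/-- if `W` is an invariant set of density operators and `H_W` is the
span of the supports of its elements, then the set of density operators supported
on `H_W` is invariant. -/
theorem support_span_invariant
    (n K : ℕ)
    (M : Fin K → Matrix (Fin n) (Fin n) ℂ)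
    (hTP : ∑ k, (M k)ᴴ * M k = 1)
    (W : Set (Matrix (Fin n) (Fin n) ℂ))
    (hW : ∀ ρ ∈ W, ρ.PosSemidef ∧ ρ.trace = 1)
    (hinv : ∀ ρ ∈ W, (∑ k, M k * ρ * (M k)ᴴ) ∈ W) :
    ∀ ρ : Matrix (Fin n) (Fin n) ℂ, ρ.PosSemidef → ρ.trace = 1 →
      LinearMap.range ρ.mulVecLin ≤ (⨆ σ ∈ W, LinearMap.range σ.mulVecLin) →
      ((∑ k, M k * ρ * (M k)ᴴ).PosSemidef ∧ (∑ k, M k * ρ * (M k)ᴴ).trace = 1 ∧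
        LinearMap.range (∑ k, M k * ρ * (M k)ᴴ).mulVecLin ≤
          (⨆ σ ∈ W, LinearMap.range σ.mulVecLin)) := by
  intro ρ hρ hρtr hρsupp
  have hpsd_terms : ∀ (τ : Matrix (Fin n) (Fin n) ℂ), τ.PosSemidef →
      ∀ k, (M k * τ * (M k)ᴴ).PosSemidef := fun τ hτ k => by
    simpa [Matrix.mul_assoc] using hτ.mul_mul_conjTranspose_same (M k)
  have hpsd : (∑ k, M k * ρ * (M k)ᴴ).PosSemidef :=
    posSemidef_sum' _ (fun k => hpsd_terms ρ hρ k)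
  refine ⟨hpsd, ?_, ?_⟩
  · -- trace
    calc (∑ k, M k * ρ * (M k)ᴴ).trace
        = ∑ k, (M k * ρ * (M k)ᴴ).trace := Matrix.trace_sum _ _
      _ = ∑ k, ((M k)ᴴ * M k * ρ).trace := by
          refine Finset.sum_congr rfl fun k _ => ?_
          rw [Matrix.trace_mul_cycle, Matrix.mul_assoc]
      _ = ((∑ k, (M k)ᴴ * M k) * ρ).trace := by
          rw [Finset.sum_mul, ← Matrix.trace_sum]
      _ = 1 := by rw [hTP, Matrix.one_mul, hρtr]
  · -- support
    set HW := ⨆ σ ∈ W, LinearMap.range σ.mulVecLin with hHW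
    -- Step A : each M k maps H_W into H_W
    have stepA : ∀ σ ∈ W, ∀ k, Submodule.map (M k).mulVecLin
        (LinearMap.range σ.mulVecLin) ≤ HW := by
      intro σ hσW k
      have hσ := (hW σ hσW).1
      rw [map_range_psd hσ (M k)]
      -- range (M k σ (M k)ᴴ) ≤ range (∑ j, M j σ (M j)ᴴ)
      have hterm : LinearMap.range (M k * σ * (M k)ᴴ).mulVecLin ≤
          LinearMap.range (∑ j, M j * σ * (M j)ᴴ).mulVecLin := by
        apply range_le_of_ker_le (hpsd_terms σ hσ k).1
          (posSemidef_sum' _ (fun j => hpsd_terms σ hσ j)).1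
        exact ker_sum_le_ker _ (fun j => hpsd_terms σ hσ j) k
      refine hterm.trans ?_
      exact le_iSup₂_of_le _ (hinv σ hσW) le_rfl
    -- Step B
    refine (range_sum_le _).trans ?_
    refine iSup_le fun k => ?_
    have : LinearMap.range (M k * ρ * (M k)ᴴ).mulVecLin =
        Submodule.map (M k).mulVecLin (LinearMap.range ρ.mulVecLin) :=
      (map_range_psd hρ (M k)).symm
    rw [this]
    calc Submodule.map (M k).mulVecLin (LinearMap.range ρ.mulVecLin)
        ≤ Submodule.map (M k).mulVecLin HW := Submodule.map_mono hρsupp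
      _ = ⨆ σ ∈ W, Submodule.map (M k).mulVecLin (LinearMap.range σ.mulVecLin) := by
          rw [hHW, Submodule.map_iSup]
          exact iSup_congr fun σ => Submodule.map_iSup _ _
      _ ≤ HW := iSup₂_le fun σ hσW => stepA σ hσW k
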